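/- Let C > 0, σ₀ > 0, λ₀ > 0 and let q be the associated function. Then for all 0 ≤ t ≤ T and all λ with 0 < λ < λ₀: ∫_t^T e^{−λs}·q(s−t) ds ≤ (e^{−λt}/(√π·C·σ₀))·(1/√λ₀ + √λ₀/(λ + λ₀)). -/

import Mathlib

noncomputable section

open MeasureTheory

/-- The function `q = q^{κ,lam₀,σ₀}`: `q(t) = 1/(√(2πt)·C·σ₀)` for `t < 1/(2lam₀)` and
`q(t) = (√(lam₀e)/(√π·C·σ₀))·e^{−lam₀ t}` for `t ≥ 1/(2lam₀)`. -/
def qfun (C σ₀ lam₀ : ℝ) (t : ℝ) : ℝ :=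
  if t < 1 / (2 * lam₀) then 1 / (Real.sqrt (2 * Real.pi * t) * C * σ₀)
  else Real.sqrt (lam₀ * Real.exp 1) / (Real.sqrt Real.pi * C * σ₀) * Real.exp (-lam₀ * t)

/-- integral of `c₁ * u ^ (-1/2)` from `0` to `s`. -/
lemma aux_int_rpow (c₁ s : ℝ) (hs : 0 ≤ s) :
    ∫ u in (0:ℝ)..s, c₁ * u ^ (-(1:ℝ)/2) = c₁ * (2 * Real.sqrt s) := by
  rw [intervalIntegral.integral_const_mul, integral_rpow (Or.inl (by norm_num))]
  rw [Real.sqrt_eq_rpow]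
  norm_num
  exact Or.inl (by ring)

/-- scalar identity: `2 c₁ √a = (1/(√π C σ₀)) (1/√λ₀)`. -/
lemma aux_id1 (C σ₀ lam₀ : ℝ) (hC : 0 < C) (hσ₀ : 0 < σ₀) (hlam₀ : 0 < lam₀) :
    1 / (Real.sqrt (2 * Real.pi) * C * σ₀) * (2 * Real.sqrt (1 / (2 * lam₀))) =
      1 / (Real.sqrt Real.pi * C * σ₀) * (1 / Real.sqrt lam₀) := by
  have h2 : (0:ℝ) ≤ 2 := by norm_num
  rw [Real.sqrt_mul h2, one_div (2 * lam₀), Real.sqrt_inv, Real.sqrt_mul h2]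
  have hs2 : Real.sqrt 2 ≠ 0 := by positivity
  have hsp : Real.sqrt Real.pi ≠ 0 := by positivity
  have hsl : Real.sqrt lam₀ ≠ 0 := by positivity
  field_simp
  rw [Real.sq_sqrt h2]

/-- key bound: `√(λ₀ e) e^{-(λ+λ₀)/(2λ₀)} ≤ √λ₀`. -/
lemma aux_id2 (lam lam₀ : ℝ) (hlam₀ : 0 < lam₀) (hlam0 : 0 < lam) :
    Real.sqrt (lam₀ * Real.exp 1) * Real.exp (-(lam + lam₀) * (1 / (2 * lam₀))) ≤
      Real.sqrt lam₀ := by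
  have h1 : Real.sqrt (lam₀ * Real.exp 1) = Real.sqrt lam₀ * Real.exp (1/2) := by
    rw [Real.sqrt_mul hlam₀.le, Real.exp_half]
  rw [h1, mul_assoc, ← Real.exp_add]
  have h2 : (1:ℝ)/2 + -(lam + lam₀) * (1 / (2 * lam₀)) ≤ 0 := by
    have h : (1:ℝ)/2 ≤ (lam + lam₀) * (1 / (2 * lam₀)) := by
      rw [mul_one_div, le_div_iff₀ (by positivity)]
      linarith
    linarith
  calc Real.sqrt lam₀ * Real.exp (1/2 + -(lam + lam₀) * (1 / (2 * lam₀)))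
      ≤ Real.sqrt lam₀ * 1 := by
        exact mul_le_mul_of_nonneg_left (Real.exp_le_one_iff.2 h2) (Real.sqrt_nonneg _)
    _ = Real.sqrt lam₀ := mul_one _


/-- pointwise bound in the region `u < 1/(2λ₀)`. -/
lemma aux_ptwise1 (C σ₀ lam₀ lam u : ℝ) (hC : 0 < C) (hσ₀ : 0 < σ₀) (hlam₀ : 0 < lam₀)
    (hlam0 : 0 < lam) (hu0 : 0 ≤ u) (h : u < 1 / (2 * lam₀)) :
    Real.exp (-lam * u) * qfun C σ₀ lam₀ u ≤
      1 / (Real.sqrt (2 * Real.pi) * C * σ₀) * u ^ (-(1:ℝ)/2) := by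
  rw [qfun, if_pos h]
  have hq : (1:ℝ) / (Real.sqrt (2 * Real.pi * u) * C * σ₀) =
      1 / (Real.sqrt (2 * Real.pi) * C * σ₀) * u ^ (-(1:ℝ)/2) := by
    rw [Real.sqrt_mul (by positivity : (0:ℝ) ≤ 2 * Real.pi),
      show (-(1:ℝ)/2) = -(1/2) by norm_num, Real.rpow_neg hu0, ← Real.sqrt_eq_rpow,
      one_div, one_div, mul_inv, mul_inv, mul_inv]
    ring
  rw [hq]
  have hX : (0:ℝ) ≤ 1 / (Real.sqrt (2 * Real.pi) * C * σ₀) * u ^ (-(1:ℝ)/2) := by positivity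
  have hexp : Real.exp (-lam * u) ≤ 1 :=
    Real.exp_le_one_iff.2 (by nlinarith [mul_nonneg hlam0.le hu0])
  exact mul_le_of_le_one_left hX hexp

/-- pointwise identity in the region `u ≥ 1/(2λ₀)`. -/
lemma aux_ptwise2 (C σ₀ lam₀ lam u : ℝ) (h : ¬ u < 1 / (2 * lam₀)) :
    Real.exp (-lam * u) * qfun C σ₀ lam₀ u =
      Real.sqrt (lam₀ * Real.exp 1) / (Real.sqrt Real.pi * C * σ₀) *
        Real.exp (-(lam + lam₀) * u) := by
  rw [qfun, if_neg h,
    show Real.exp (-lam * u) *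
        (Real.sqrt (lam₀ * Real.exp 1) / (Real.sqrt Real.pi * C * σ₀) * Real.exp (-lam₀ * u)) =
      Real.sqrt (lam₀ * Real.exp 1) / (Real.sqrt Real.pi * C * σ₀) *
        (Real.exp (-lam * u) * Real.exp (-lam₀ * u)) by ring,
    ← Real.exp_add]
  congr 2
  ring

/-- key comparison at the junction point. -/
lemma aux_P (C σ₀ lam₀ lam : ℝ) (hC : 0 < C) (hσ₀ : 0 < σ₀) (hlam₀ : 0 < lam₀)
    (hlam0 : 0 < lam) :
    Real.sqrt (lam₀ * Real.exp 1) / (Real.sqrt Real.pi * C * σ₀) *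
        Real.exp (-(lam + lam₀) * (1 / (2 * lam₀))) ≤
      1 / (Real.sqrt (2 * Real.pi) * C * σ₀) * (1 / (2 * lam₀)) ^ (-(1:ℝ)/2) := by
  have hrhs : 1 / (Real.sqrt (2 * Real.pi) * C * σ₀) * (1 / (2 * lam₀)) ^ (-(1:ℝ)/2) =
      Real.sqrt lam₀ / (Real.sqrt Real.pi * C * σ₀) := by
    rw [show (-(1:ℝ)/2) = -(1/2) by norm_num, Real.rpow_neg (by positivity),
      ← Real.sqrt_eq_rpow, one_div (2 * lam₀), Real.sqrt_inv, inv_inv,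
      Real.sqrt_mul (by norm_num : (0:ℝ) ≤ 2) Real.pi,
      Real.sqrt_mul (by norm_num : (0:ℝ) ≤ 2) lam₀]
    have hs2 : Real.sqrt 2 ≠ 0 := by positivity
    have hsp : Real.sqrt Real.pi ≠ 0 := by positivity
    field_simp
  rw [hrhs, div_mul_eq_mul_div, div_le_div_iff_of_pos_right (by positivity)]
  exact aux_id2 lam lam₀ hlam₀ hlam0

/-- main estimate after the change of variables. -/
lemma aux_main (C σ₀ lam₀ lam b : ℝ) (hC : 0 < C) (hσ₀ : 0 < σ₀) (hlam₀ : 0 < lam₀)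
    (hlam0 : 0 < lam) (hb : 0 ≤ b)
    (hF : IntervalIntegrable (fun u => Real.exp (-lam * u) * qfun C σ₀ lam₀ u) volume 0 b) :
    ∫ u in (0:ℝ)..b, Real.exp (-lam * u) * qfun C σ₀ lam₀ u ≤
      1 / (Real.sqrt Real.pi * C * σ₀) *
        (1 / Real.sqrt lam₀ + Real.sqrt lam₀ / (lam + lam₀)) := by
  have ha : (0:ℝ) < 1 / (2 * lam₀) := by positivity
  have hμ : (0:ℝ) < lam + lam₀ := by positivity
  have hc₁ : (0:ℝ) < 1 / (Real.sqrt (2 * Real.pi) * C * σ₀) := by positivity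
  have hK : (0:ℝ) < Real.sqrt (lam₀ * Real.exp 1) / (Real.sqrt Real.pi * C * σ₀) := by positivity
  set a := 1 / (2 * lam₀) with ha_def
  set c₁ := 1 / (Real.sqrt (2 * Real.pi) * C * σ₀) with hc₁_def
  set K := Real.sqrt (lam₀ * Real.exp 1) / (Real.sqrt Real.pi * C * σ₀) with hK_def
  set μ := lam + lam₀ with hμ_def
  set g := fun u : ℝ => if u < a then c₁ * u ^ (-(1:ℝ)/2) else K * Real.exp (-μ * u) with hg_def
  set m := max a b with hm_def
  have hm0 : (0:ℝ) ≤ m := le_trans ha.le (le_max_left a b)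
  -- integrability of the p1 piece
  have hp1 : ∀ c d : ℝ, IntervalIntegrable (fun u : ℝ => c₁ * u ^ (-(1:ℝ)/2)) volume c d :=
    fun c d => (intervalIntegral.intervalIntegrable_rpow' (by norm_num)).const_mul c₁
  -- integrability of g on [0, m]
  have hgmeas : Measurable g := by
    apply Measurable.ite (measurableSet_lt measurable_id measurable_const)
    · exact (measurable_id.pow_const _).const_mul c₁
    · exact (measurable_id.const_mul (-μ)).exp.const_mul K
  have hgm : IntervalIntegrable g volume 0 m := by
    apply IntervalIntegrable.mono_fun ((hp1 0 m).add (intervalIntegrable_const (c := K)))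
      hgmeas.aestronglyMeasurable
    filter_upwards [ae_restrict_mem measurableSet_uIoc] with u hu
    rw [Set.uIoc_of_le hm0] at hu
    have hu0 : 0 < u := hu.1
    have hg0 : 0 ≤ g u := by
      rw [hg_def]
      dsimp only
      split
      · positivity
      · positivity
    have hb0 : (0:ℝ) ≤ c₁ * u ^ (-(1:ℝ)/2) + K := by positivity
    rw [Real.norm_eq_abs, Real.norm_eq_abs, abs_of_nonneg hg0, abs_of_nonneg hb0]
    rw [hg_def]
    dsimp only
    split
    · nlinarith
    · have h1 : Real.exp (-μ * u) ≤ 1 :=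
        Real.exp_le_one_iff.2 (by nlinarith [mul_nonneg hμ.le hu0.le])
      have h2 : (0:ℝ) ≤ c₁ * u ^ (-(1:ℝ)/2) := by positivity
      nlinarith
  have hsub : ∀ c d : ℝ, 0 ≤ c → c ≤ m → 0 ≤ d → d ≤ m →
      IntervalIntegrable g volume c d := by
    intro c d hc hcm hd hdm
    apply hgm.mono_set
    rw [Set.uIcc_of_le hm0]
    intro x hx
    rcases le_total c d with hcd | hcd
    · rw [Set.uIcc_of_le hcd] at hx
      exact ⟨le_trans hc hx.1, le_trans hx.2 hdm⟩
    · rw [Set.uIcc_of_ge hcd] at hx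
      exact ⟨le_trans hd hx.1, le_trans hx.2 hcm⟩
  -- pointwise bound F ≤ g
  have hFg : ∀ u ∈ Set.Icc (0:ℝ) b, Real.exp (-lam * u) * qfun C σ₀ lam₀ u ≤ g u := by
    intro u hu
    rw [hg_def]
    dsimp only
    split
    · next h => exact aux_ptwise1 C σ₀ lam₀ lam u hC hσ₀ hlam₀ hlam0 hu.1 h
    · next h => exact le_of_eq (aux_ptwise2 C σ₀ lam₀ lam u h)
  have step1 : ∫ u in (0:ℝ)..b, Real.exp (-lam * u) * qfun C σ₀ lam₀ u ≤ ∫ u in (0:ℝ)..b, g u :=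
    intervalIntegral.integral_mono_on hb hF
      (hsub 0 b le_rfl hm0 hb (le_max_right a b)) hFg
  -- junction bound
  have hPa : K * Real.exp (-μ * a) ≤ c₁ * a ^ (-(1:ℝ)/2) :=
    aux_P C σ₀ lam₀ lam hC hσ₀ hlam₀ hlam0
  have hterm1 : c₁ * (2 * Real.sqrt a) =
      1 / (Real.sqrt Real.pi * C * σ₀) * (1 / Real.sqrt lam₀) :=
    aux_id1 C σ₀ lam₀ hC hσ₀ hlam₀
  have hterm2 : (0:ℝ) ≤ 1 / (Real.sqrt Real.pi * C * σ₀) * (Real.sqrt lam₀ / μ) := by positivity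
  have hRHS : 1 / (Real.sqrt Real.pi * C * σ₀) *
        (1 / Real.sqrt lam₀ + Real.sqrt lam₀ / (lam + lam₀)) =
      1 / (Real.sqrt Real.pi * C * σ₀) * (1 / Real.sqrt lam₀) +
        1 / (Real.sqrt Real.pi * C * σ₀) * (Real.sqrt lam₀ / μ) := by
    rw [← hμ_def]; ring
  by_cases hba : b ≤ a
  · -- small interval case
    have step2 : ∫ u in (0:ℝ)..b, g u ≤ ∫ u in (0:ℝ)..b, c₁ * u ^ (-(1:ℝ)/2) := by
      apply intervalIntegral.integral_mono_on hb
        (hsub 0 b le_rfl hm0 hb (le_max_right a b)) (hp1 0 b)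
      intro u hu
      rw [hg_def]
      dsimp only
      split
      · exact le_rfl
      · next h =>
        have hua : u = a := le_antisymm (le_trans hu.2 hba) (not_lt.1 h)
        rw [hua]
        exact hPa
    rw [aux_int_rpow c₁ b hb] at step2
    have step3 : c₁ * (2 * Real.sqrt b) ≤ c₁ * (2 * Real.sqrt a) := by
      have := Real.sqrt_le_sqrt hba
      nlinarith
    rw [hRHS]
    linarith
  · push_neg at hba
    have hab : a ≤ b := hba.le
    have hsplit : ∫ u in (0:ℝ)..b, g u = (∫ u in (0:ℝ)..a, g u) + ∫ u in a..b, g u :=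
      (intervalIntegral.integral_add_adjacent_intervals
        (hsub 0 a le_rfl hm0 ha.le (le_max_left a b))
        (hsub a b ha.le (le_max_left a b) hb (le_max_right a b))).symm
    have step2a : ∫ u in (0:ℝ)..a, g u ≤ c₁ * (2 * Real.sqrt a) := by
      rw [← aux_int_rpow c₁ a ha.le]
      apply intervalIntegral.integral_mono_on ha.le
        (hsub 0 a le_rfl hm0 ha.le (le_max_left a b)) (hp1 0 a)
      intro u hu
      rw [hg_def]
      dsimp only
      split
      · exact le_rfl
      · next h =>
        have hua : u = a := le_antisymm hu.2 (not_lt.1 h)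
        rw [hua]
        exact hPa
    have step2b : ∫ u in a..b, g u ≤ 1 / (Real.sqrt Real.pi * C * σ₀) * (Real.sqrt lam₀ / μ) := by
      have hcongr : ∫ u in a..b, g u = ∫ u in a..b, K * Real.exp (-μ * u) := by
        apply intervalIntegral.integral_congr
        intro u hu
        rw [Set.uIcc_of_le hab] at hu
        rw [hg_def]
        dsimp only
        rw [if_neg (not_lt.2 hu.1)]
      have hexpint : ∫ u in a..b, Real.exp (-μ * u) =
          (Real.exp (-μ * a) - Real.exp (-μ * b)) / μ := by
        rw [intervalIntegral.integral_comp_mul_left Real.exp (neg_ne_zero.2 hμ.ne')]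
        rw [integral_exp, smul_eq_mul, inv_neg, div_eq_mul_inv]
        ring
      rw [hcongr, intervalIntegral.integral_const_mul, hexpint]
      have h1 : K * ((Real.exp (-μ * a) - Real.exp (-μ * b)) / μ) ≤
          K * Real.exp (-μ * a) / μ := by
        rw [mul_div_assoc]
        apply mul_le_mul_of_nonneg_left _ hK.le
        apply (div_le_div_iff_of_pos_right hμ).2
        linarith [Real.exp_pos (-μ * b)]
      have h2 : K * Real.exp (-μ * a) ≤ Real.sqrt lam₀ / (Real.sqrt Real.pi * C * σ₀) := by
        rw [hK_def, hμ_def, ha_def, div_mul_eq_mul_div,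
          div_le_div_iff_of_pos_right (by positivity : (0:ℝ) < Real.sqrt Real.pi * C * σ₀)]
        exact aux_id2 lam lam₀ hlam₀ hlam0
      have h3 : K * Real.exp (-μ * a) / μ ≤
          1 / (Real.sqrt Real.pi * C * σ₀) * (Real.sqrt lam₀ / μ) := by
        rw [show 1 / (Real.sqrt Real.pi * C * σ₀) * (Real.sqrt lam₀ / μ)
            = (Real.sqrt lam₀ / (Real.sqrt Real.pi * C * σ₀)) / μ by ring]
        exact (div_le_div_iff_of_pos_right hμ).2 h2
      linarith
    rw [hRHS]
    linarith

/-- `∫_t^T e^{−λs} q(s−t) ds ≤ (e^{−λt}/(√π C σ₀))(1/√lam₀ + √lam₀/(λ+lam₀))`. -/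
theorem stmt11 (C σ₀ lam₀ : ℝ) (hC : 0 < C) (hσ₀ : 0 < σ₀) (hlam₀ : 0 < lam₀)
    (t T lam : ℝ) (ht : 0 ≤ t) (htT : t ≤ T) (hlam0 : 0 < lam) (hlam : lam < lam₀) :
    ∫ s in t..T, Real.exp (-lam * s) * qfun C σ₀ lam₀ (s - t) ≤
      Real.exp (-lam * t) / (Real.sqrt Real.pi * C * σ₀) *
        (1 / Real.sqrt lam₀ + Real.sqrt lam₀ / (lam + lam₀)) := by
  by_cases hint : IntervalIntegrable
      (fun s => Real.exp (-lam * s) * qfun C σ₀ lam₀ (s - t)) volume t T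
  · have hb : (0:ℝ) ≤ T - t := sub_nonneg.2 htT
    have key : (∫ s in t..T, Real.exp (-lam * s) * qfun C σ₀ lam₀ (s - t))
        = ∫ u in (0:ℝ)..(T - t),
            Real.exp (-lam * t) * (Real.exp (-lam * u) * qfun C σ₀ lam₀ u) := by
      have h1 := intervalIntegral.integral_comp_sub_right (a := t) (b := T)
        (fun u => Real.exp (-lam * t) * (Real.exp (-lam * u) * qfun C σ₀ lam₀ u)) t
      rw [sub_self] at h1
      rw [← h1]
      apply intervalIntegral.integral_congr
      intro s _
      simp only
      rw [← mul_assoc, ← Real.exp_add]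
      congr 2
      ring
    have hF : IntervalIntegrable (fun u => Real.exp (-lam * u) * qfun C σ₀ lam₀ u)
        volume 0 (T - t) := by
      have h1 := (hint.const_mul (Real.exp (lam * t))).comp_add_right t
      rw [sub_self] at h1
      have h2 : (fun u => Real.exp (-lam * u) * qfun C σ₀ lam₀ u) =
          fun x => Real.exp (lam * t) * (Real.exp (-lam * (x + t)) * qfun C σ₀ lam₀ (x + t - t)) := by
        funext x
        rw [add_sub_cancel_right, ← mul_assoc, ← Real.exp_add]
        congr 2
        ring
      rw [h2]
      exact h1
    rw [key, intervalIntegral.integral_const_mul]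
    have hmain := aux_main C σ₀ lam₀ lam (T - t) hC hσ₀ hlam₀ hlam0 hb hF
    calc Real.exp (-lam * t) * ∫ u in (0:ℝ)..(T - t), Real.exp (-lam * u) * qfun C σ₀ lam₀ u
        ≤ Real.exp (-lam * t) * (1 / (Real.sqrt Real.pi * C * σ₀) *
            (1 / Real.sqrt lam₀ + Real.sqrt lam₀ / (lam + lam₀))) :=
          mul_le_mul_of_nonneg_left hmain (Real.exp_nonneg _)
      _ = Real.exp (-lam * t) / (Real.sqrt Real.pi * C * σ₀) *
            (1 / Real.sqrt lam₀ + Real.sqrt lam₀ / (lam + lam₀)) := by ring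
  · rw [intervalIntegral.integral_undef hint]
    positivity
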